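/- The supremum of (1/2)·[⟨Φ|Π₁|Φ⟩ + (1/2)·Tr Π₂] over all pairs (Π₁, Π₂) of positive semidefinite 4×4 matrices satisfying Π₁ + Π₂ = I₂ ⊗ X for some positive semidefinite 2×2 matrix X with Tr X = 1, equals 7/8. (This is the optimal average success probability of equivalence determination when a full classical description of the candidate U₁ is given, no quantum sample of the Haar-random candidate U₂ is given, and the target box is used once.) -/

import Mathlib

open MeasureTheory Matrix ComplexOrder

noncomputable section

/-- `SU(2)`: the special unitary group of 2×2 complex matrices. -/
abbrev SU2 := Matrix.specialUnitaryGroup (Fin 2) ℂ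

instance : MeasurableSpace SU2 := borel SU2

abbrev Q := Fin 2

abbrev Mat2 := Matrix Q Q ℂ

/-- The rank-one outer product `|v⟩⟨v|`. -/
def outer {n : Type*} (v : n → ℂ) : Matrix n n ℂ :=
  fun a b => v a * (starRingEnd ℂ) (v b)

abbrev Idx2 := Q × Q

abbrev Mat4 := Matrix Idx2 Idx2 ℂ

/-- The unnormalized maximally entangled vector `|Φ⟩ = |00⟩ + |11⟩`. -/
def Phi : Idx2 → ℂ := fun p => if p.1 = p.2 then 1 else 0

/-- `I₂ ⊗ X` : identity on the first qubit factor tensored with `X` on the second. -/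
def IdX (X : Mat2) : Mat4 := fun p q => (if p.1 = q.1 then 1 else 0) * X p.2 q.2

/-- Optimal `X`. -/
def optX : Mat2 := fun i j => if i = j then 1/2 else 0

/-- Optimal `Π₁`. -/
def opt1 : Mat4 := (1/4 : ℂ) • outer Phi

/-- Optimal `Π₂`. -/
def opt2 : Mat4 := IdX optX - opt1

/-- The auxiliary vector `|00⟩ - |11⟩`. -/
def vv : Idx2 → ℂ := fun p => if p = (0,0) then 1 else if p = (1,1) then -1 else 0

/-- Standard basis vectors. -/
def ee (i j : Q) : Idx2 → ℂ := fun p => if p = (i,j) then 1 else 0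

lemma opt1_psd : opt1.PosSemidef := by
  rw [posSemidef_iff_dotProduct_mulVec]
  constructor
  · ext p q
    simp [opt1, outer, Phi, conjTranspose_apply, apply_ite (starRingEnd ℂ), map_ofNat]
    by_cases h1 : p.1 = p.2 <;> by_cases h2 : q.1 = q.2 <;> simp [h1, h2]
  · intro x
    have h : star x ⬝ᵥ (opt1 *ᵥ x) =
        (1/4) * (star (x (0,0) + x (1,1)) * (x (0,0) + x (1,1))) := by
      simp [opt1, outer, Phi, dotProduct, Matrix.mulVec, Fintype.sum_prod_type,
        Fin.sum_univ_two]
      ring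
    rw [h]
    exact mul_nonneg (by norm_num [Complex.le_def]) (star_mul_self_nonneg _)

lemma opt2_psd : opt2.PosSemidef := by
  rw [posSemidef_iff_dotProduct_mulVec]
  constructor
  · ext p q
    simp [opt2, opt1, IdX, optX, outer, Phi, conjTranspose_apply, apply_ite (starRingEnd ℂ),
      map_ofNat]
    by_cases h1 : p.1 = p.2 <;> by_cases h2 : q.1 = q.2 <;> by_cases h3 : p.1 = q.1 <;>
      by_cases h4 : p.2 = q.2 <;> simp [h1, h2, h3, h4, eq_comm]
  · intro x
    have h : star x ⬝ᵥ (opt2 *ᵥ x) =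
        (1/4) * (star (x (0,0) - x (1,1)) * (x (0,0) - x (1,1)))
        + (1/2) * (star (x (0,1)) * (x (0,1))) + (1/2) * (star (x (1,0)) * (x (1,0))) := by
      simp [opt2, opt1, IdX, optX, outer, Phi, dotProduct, Matrix.mulVec,
        Fintype.sum_prod_type, Fin.sum_univ_two]
      ring
    rw [h]
    have n4 : (0:ℂ) ≤ 1/4 := by norm_num [Complex.le_def]
    have n2 : (0:ℂ) ≤ 1/2 := by norm_num [Complex.le_def]
    exact add_nonneg (add_nonneg (mul_nonneg n4 (star_mul_self_nonneg _))
      (mul_nonneg n2 (star_mul_self_nonneg _))) (mul_nonneg n2 (star_mul_self_nonneg _))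

lemma optX_psd : optX.PosSemidef := by
  rw [posSemidef_iff_dotProduct_mulVec]
  constructor
  · ext p q
    simp [optX, conjTranspose_apply, apply_ite (starRingEnd ℂ), map_ofNat, eq_comm]
  · intro x
    have h : star x ⬝ᵥ (optX *ᵥ x) =
        (1/2) * (star (x 0) * (x 0)) + (1/2) * (star (x 1) * (x 1)) := by
      simp [optX, dotProduct, Matrix.mulVec, Fin.sum_univ_two]
      ring
    rw [h]
    have n2 : (0:ℂ) ≤ 1/2 := by norm_num [Complex.le_def]
    exact add_nonneg (mul_nonneg n2 (star_mul_self_nonneg _))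
      (mul_nonneg n2 (star_mul_self_nonneg _))

lemma trace_split (P : Mat4) :
    2 * P.trace = star Phi ⬝ᵥ (P *ᵥ Phi) + star vv ⬝ᵥ (P *ᵥ vv)
      + 2*(star (ee 0 1) ⬝ᵥ (P *ᵥ (ee 0 1))) + 2*(star (ee 1 0) ⬝ᵥ (P *ᵥ (ee 1 0))) := by
  simp [dotProduct, Matrix.mulVec, Matrix.trace, Matrix.diag, Fintype.sum_prod_type,
    Fin.sum_univ_two, Phi, vv, ee, Prod.ext_iff]
  ring

lemma phi_IdX (X : Mat2) : star Phi ⬝ᵥ ((IdX X) *ᵥ Phi) = X.trace := by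
  simp [dotProduct, Matrix.mulVec, Matrix.trace, Matrix.diag, Fintype.sum_prod_type,
    Fin.sum_univ_two, Phi, IdX]

lemma trace_IdX (X : Mat2) : (IdX X).trace = 2 * X.trace := by
  simp [Matrix.trace, Matrix.diag, Fintype.sum_prod_type, Fin.sum_univ_two, IdX]
  ring

/-- The optimal average success probability of equivalence determination with a full
classical description of `U₁`, no quantum sample of the Haar-random `U₂`, and a single
use of the target box, is `7/8`. -/
theorem known_U1_no_sample_optimum :
    IsLUB {p : ℝ | ∃ (P₁ P₂ : Mat4) (X : Mat2),
      P₁.PosSemidef ∧ P₂.PosSemidef ∧ X.PosSemidef ∧ X.trace = 1 ∧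
      P₁ + P₂ = IdX X ∧
      (1/2 : ℂ) * (star Phi ⬝ᵥ (P₁ *ᵥ Phi) + (1/2 : ℂ) * P₂.trace) = (p : ℂ)}
      (7/8) := by
  apply IsGreatest.isLUB
  constructor
  · -- membership: the optimum is attained
    refine ⟨opt1, opt2, optX, opt1_psd, opt2_psd, optX_psd, ?_, ?_, ?_⟩
    · simp [optX, Matrix.trace, Matrix.diag, Fin.sum_univ_two]
    · simp [opt2]
    · simp [opt1, opt2, IdX, optX, outer, Phi, dotProduct, Matrix.mulVec, Matrix.trace,
        Matrix.diag, Fintype.sum_prod_type, Fin.sum_univ_two]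
      norm_num
  · -- upper bound
    rintro p ⟨P₁, P₂, X, h1, h2, hX, htr, hsum, hp⟩
    set t := star Phi ⬝ᵥ (P₁ *ᵥ Phi) with ht
    have ht0 : 0 ≤ t := h1.dotProduct_mulVec_nonneg Phi
    have hu0 : 0 ≤ star Phi ⬝ᵥ (P₂ *ᵥ Phi) := h2.dotProduct_mulVec_nonneg Phi
    have hsum' : t + star Phi ⬝ᵥ (P₂ *ᵥ Phi) = 1 := by
      have : star Phi ⬝ᵥ ((P₁ + P₂) *ᵥ Phi) = X.trace := by rw [hsum, phi_IdX]
      rw [Matrix.add_mulVec, dotProduct_add, htr] at this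
      exact this
    have etr : P₁.trace + P₂.trace = 2 := by
      have : (P₁ + P₂).trace = 2 * X.trace := by rw [hsum, trace_IdX]
      rw [Matrix.trace_add, htr] at this
      simpa using this
    have hkey : t ≤ 2 * P₁.trace := by
      rw [trace_split P₁, ← ht]
      have n2 : (0:ℂ) ≤ 2 := by norm_num [Complex.le_def]
      have h0 : 0 ≤ star vv ⬝ᵥ (P₁ *ᵥ vv) + 2*(star (ee 0 1) ⬝ᵥ (P₁ *ᵥ (ee 0 1)))
          + 2*(star (ee 1 0) ⬝ᵥ (P₁ *ᵥ (ee 1 0))) :=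
        add_nonneg (add_nonneg (h1.dotProduct_mulVec_nonneg vv) (mul_nonneg n2 (h1.dotProduct_mulVec_nonneg (ee 0 1))))
          (mul_nonneg n2 (h1.dotProduct_mulVec_nonneg (ee 1 0)))
      calc t ≤ t + (star vv ⬝ᵥ (P₁ *ᵥ vv) + 2*(star (ee 0 1) ⬝ᵥ (P₁ *ᵥ (ee 0 1)))
          + 2*(star (ee 1 0) ⬝ᵥ (P₁ *ᵥ (ee 1 0)))) := le_add_of_nonneg_right h0
        _ = star Phi ⬝ᵥ (P₁ *ᵥ Phi) + star vv ⬝ᵥ (P₁ *ᵥ vv)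
          + 2*(star (ee 0 1) ⬝ᵥ (P₁ *ᵥ (ee 0 1))) + 2*(star (ee 1 0) ⬝ᵥ (P₁ *ᵥ (ee 1 0))) := by
          rw [ht]; ring
    -- pass to real parts
    have ht_re : 0 ≤ t.re := (Complex.le_def.mp ht0).1
    have hu_re : 0 ≤ (star Phi ⬝ᵥ (P₂ *ᵥ Phi)).re := (Complex.le_def.mp hu0).1
    have hsum_re : t.re + (star Phi ⬝ᵥ (P₂ *ᵥ Phi)).re = 1 := by
      have := congrArg Complex.re hsum'
      simpa using this
    have hkey_re : t.re ≤ 2 * P₁.trace.re := by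
      have := (Complex.le_def.mp hkey).1
      simpa [Complex.mul_re] using this
    have hp' : 2*t + 2 - P₁.trace = 4*(p:ℂ) := by linear_combination 4*hp - etr
    have hp_re : 2*t.re + 2 - P₁.trace.re = 4*p := by
      have := congrArg Complex.re hp'
      simpa [Complex.mul_re, Complex.sub_re, Complex.add_re] using this
    linarith

end
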